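/- Let N_{n,k} denote the Lucas-Narayana numbers in the fraction field K of ℤ[s,t]. For all integers n and k with 2 ≤ k ≤ n-1, the recursion N_{n,k} = ({k}·{n-1}/{n-k})·N_{n-1,k} + t·({n-k}·{n-1}/{k})·N_{n-1,k-1} holds. -/

import Mathlib

open MvPolynomial

/-- The polynomial ring ℤ[s,t] (s = X 0, t = X 1). -/
abbrev R := MvPolynomial (Fin 2) ℤ

/-- The fraction field of ℤ[s,t]. -/
abbrev K := FractionRing R

/-- The generalized Lucas polynomials: {0} = 0, {1} = 1, {n} = s·{n-1} + t·{n-2}. -/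
noncomputable def lucas : ℕ → R
  | 0 => 0
  | 1 => 1
  | n + 2 => X 0 * lucas (n + 1) + X 1 * lucas n

/-- The Lucastorial {n}! = {n}·{n-1}⋯{2}·{1}, with {0}! = 1. -/
noncomputable def lucasFact : ℕ → R
  | 0 => 1
  | n + 1 => lucas (n + 1) * lucasFact n

/-- The Lucasnomial {n choose k} = {n}!/({k}!·{n-k}!) as an element of K. -/
noncomputable def lucasBinom (n k : ℕ) : K :=
  algebraMap R K (lucasFact n) /
    (algebraMap R K (lucasFact k) * algebraMap R K (lucasFact (n - k)))

/-- The Lucas-Narayana number N_{n,k} = (1/{n})·{n choose k}·{n choose k-1} in K. -/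
noncomputable def lucasNarayana (n k : ℕ) : K :=
  (algebraMap R K (lucas n))⁻¹ * lucasBinom n k * lucasBinom n (k - 1)

lemma lucas_add (a : ℕ) : ∀ b, lucas (a + b + 1) = lucas (a+1) * lucas (b+1) + X 1 * lucas a * lucas b := by
  have key : ∀ b, (lucas (a + b + 1) = lucas (a+1) * lucas (b+1) + X 1 * lucas a * lucas b) ∧
      (lucas (a + (b+1) + 1) = lucas (a+1) * lucas (b+2) + X 1 * lucas a * lucas (b+1)) := by
    intro b
    induction b with
    | zero => constructor <;> simp [lucas] <;> ring
    | succ c ih =>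
      refine ⟨ih.2, ?_⟩
      have h1 := ih.1
      have h2 := ih.2
      have : a + (c + 2) + 1 = (a + c + 1) + 2 := by ring
      rw [this, show lucas ((a+c+1)+2) = X 0 * lucas (a+c+1+1) + X 1 * lucas (a+c+1) from rfl,
        show a + c + 1 + 1 = a + (c+1) + 1 from by ring, h2, h1,
        show lucas (c+3) = X 0 * lucas (c+2) + X 1 * lucas (c+1) from rfl,
        show lucas (c+2) = X 0 * lucas (c+1) + X 1 * lucas c from rfl]
      ring
  exact fun b => (key b).1

lemma lucas_eval_one (m : ℕ) : eval (fun i : Fin 2 => if i = 0 then (1:ℤ) else 0) (lucas (m+1)) = 1 := by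
  induction m using Nat.strong_induction_on with
  | _ m ih =>
    match m with
    | 0 => simp [lucas]
    | n + 1 =>
      rw [show lucas (n+2) = X 0 * lucas (n+1) + X 1 * lucas n from rfl]
      simp [ih n (by omega)]

lemma lucas_ne_zero {m : ℕ} (h : m ≠ 0) : lucas m ≠ 0 := by
  obtain ⟨n, rfl⟩ := Nat.exists_eq_succ_of_ne_zero h
  intro hz
  have := lucas_eval_one n
  rw [hz] at this
  simp at this

lemma lucasFact_ne_zero (n : ℕ) : lucasFact n ≠ 0 := by
  induction n with
  | zero => simp [lucasFact]
  | succ m ih => exact mul_ne_zero (lucas_ne_zero (Nat.succ_ne_zero m)) ih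

lemma map_lucas_ne_zero {m : ℕ} (h : m ≠ 0) : algebraMap R K (lucas m) ≠ 0 := by
  simpa using (map_ne_zero_iff _ (IsFractionRing.injective R K)).2 (lucas_ne_zero h)

lemma map_lucasFact_ne_zero (m : ℕ) : algebraMap R K (lucasFact m) ≠ 0 := by
  simpa using (map_ne_zero_iff _ (IsFractionRing.injective R K)).2 (lucasFact_ne_zero m)

lemma map_lucasFact_succ (m : ℕ) :
    algebraMap R K (lucasFact (m+1)) = algebraMap R K (lucas (m+1)) * algebraMap R K (lucasFact m) := by
  rw [show lucasFact (m+1) = lucas (m+1) * lucasFact m from rfl, map_mul]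

set_option synthInstance.maxHeartbeats 1000000 in
set_option maxHeartbeats 2000000 in
/-- For 2 ≤ k ≤ n-1, the Lucas-Narayana numbers satisfy
N_{n,k} = ({k}·{n-1}/{n-k})·N_{n-1,k} + t·({n-k}·{n-1}/{k})·N_{n-1,k-1}. -/
theorem lucasNarayana_rec (n k : ℕ) (h2 : 2 ≤ k) (hk : k ≤ n - 1) :
    lucasNarayana n k =
      algebraMap R K (lucas k) * algebraMap R K (lucas (n - 1)) /
          algebraMap R K (lucas (n - k)) * lucasNarayana (n - 1) k
        + algebraMap R K (X 1) *
          (algebraMap R K (lucas (n - k)) * algebraMap R K (lucas (n - 1)) /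
            algebraMap R K (lucas k)) * lucasNarayana (n - 1) (k - 1) := by
  obtain ⟨j, rfl⟩ : ∃ j, k = j + 2 := ⟨k - 2, by omega⟩
  obtain ⟨d, rfl⟩ : ∃ d, n = j + d + 3 := ⟨n - j - 3, by omega⟩
  simp only [lucasNarayana, lucasBinom,
    show j + d + 3 - 1 = j + d + 2 from by omega,
    show j + d + 3 - (j + 2) = d + 1 from by omega,
    show j + 2 - 1 = j + 1 from by omega,
    show j + d + 3 - (j + 1) = d + 2 from by omega,
    show j + d + 2 - (j + 2) = d from by omega,
    show j + d + 2 - (j + 1) = d + 1 from by omega,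
    show j + 1 - 1 = j from by omega,
    show j + d + 2 - j = d + 2 from by omega]
  have key : algebraMap R K (lucas (j+d+3)) =
      algebraMap R K (lucas (j+2)) * algebraMap R K (lucas (d+2))
        + algebraMap R K (X 1) * algebraMap R K (lucas (j+1)) * algebraMap R K (lucas (d+1)) := by
    rw [show j + d + 3 = (j+1) + (d+1) + 1 from by omega, lucas_add (j+1) (d+1)]
    push_cast [map_add, map_mul]
    ring
  rw [show j + d + 3 = (j + d + 2) + 1 from rfl, map_lucasFact_succ (j+d+2),
    map_lucasFact_succ (d+1), map_lucasFact_succ d, map_lucasFact_succ (j+1), map_lucasFact_succ j]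
  field_simp [map_lucas_ne_zero, map_lucasFact_ne_zero,
    map_lucas_ne_zero (show j+2 ≠ 0 by omega), map_lucas_ne_zero (show j+1 ≠ 0 by omega),
    map_lucas_ne_zero (show d+1 ≠ 0 by omega), map_lucas_ne_zero (show d+2 ≠ 0 by omega),
    map_lucas_ne_zero (show j+d+2 ≠ 0 by omega), map_lucas_ne_zero (show j+d+3 ≠ 0 by omega),
    map_lucas_ne_zero (show 2+j ≠ 0 by omega), map_lucas_ne_zero (show 1+j ≠ 0 by omega),
    map_lucas_ne_zero (show 1+d ≠ 0 by omega), map_lucas_ne_zero (show 2+d ≠ 0 by omega),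
    map_lucas_ne_zero (show 2+j+d ≠ 0 by omega)]
  rw [key]
  rw [show j + 1 + 1 = j + 2 from rfl, show d + 1 + 1 = d + 2 from rfl]
  ring
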